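/- Let S be a semigroup satisfying conditions (A), (B), (C), and let Q be the semigroup of ~-classes of Σ. Then the set of idempotents of Q is exactly {[a,a] : a ∈ S}; that is, an element [a,b] ∈ Q satisfies [a,b][a,b] = [a,b] if and only if [a,b] = [c,c] for some c ∈ S. -/

import Mathlib

/-- The bicyclic semigroup `𝓑` carried by `ℕ × ℕ`, an element being `(r, l)`;
`(m,n)(p,q) = (m - n + t, q - p + t)` with `t = max n p`. -/
structure Bicyclic where
  r : ℕ
  l : ℕ

instance : Mul Bicyclic :=
  ⟨fun x y => ⟨x.r + (max x.l y.r - x.l), y.l + (max x.l y.r - y.r)⟩⟩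

/-- The inverse `(m,n)⁻¹ = (n,m)` in the bicyclic semigroup. -/
def Bicyclic.inv (x : Bicyclic) : Bicyclic := ⟨x.l, x.r⟩

/-- `T` is a left I-order in the bicyclic semigroup `𝓑`. -/
def IsLeftIOrderBic (T : Set Bicyclic) : Prop :=
  ∀ q : Bicyclic, ∃ a ∈ T, ∃ b ∈ T, q = a.inv * b

/-- `r a`, the first coordinate of `φ a` in `𝓑`. -/
def rr {S : Type*} [Mul S] (φ : S →ₙ* Bicyclic) (a : S) : ℕ := (φ a).r

/-- `l a`, the second coordinate of `φ a` in `𝓑`. -/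
def ll {S : Type*} [Mul S] (φ : S →ₙ* Bicyclic) (a : S) : ℕ := (φ a).l

/-- Condition (A): the image of `φ` is a left I-order in `𝓑`. -/
def CondA {S : Type*} [Mul S] (φ : S →ₙ* Bicyclic) : Prop :=
  IsLeftIOrderBic (Set.range (⇑φ))

/-- Condition (B)(i): if `l x, l y ≥ r a` and `x * a = y * a` then `x = y`. -/
def CondBi {S : Type*} [Mul S] (φ : S →ₙ* Bicyclic) : Prop :=
  ∀ x y a : S, rr φ a ≤ ll φ x → rr φ a ≤ ll φ y → x * a = y * a → x = y

/-- Condition (B)(ii): if `r x, r y ≥ l a` and `a * x = a * y` then `x = y`. -/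
def CondBii {S : Type*} [Mul S] (φ : S →ₙ* Bicyclic) : Prop :=
  ∀ x y a : S, ll φ a ≤ rr φ x → ll φ a ≤ rr φ y → a * x = a * y → x = y

/-- Condition (C): for all `b c` there are `x y` with `x * b = y * c`,
`r x = r y`, `l x = r b - l b + max (l b) (l c)` and
`l y = r c - l c + max (l b) (l c)`. -/
def CondC {S : Type*} [Mul S] (φ : S →ₙ* Bicyclic) : Prop :=
  ∀ b c : S, ∃ x y : S, x * b = y * c ∧ rr φ x = rr φ y ∧
    ll φ x = rr φ b + (max (ll φ b) (ll φ c) - ll φ b) ∧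
    ll φ y = rr φ c + (max (ll φ b) (ll φ c) - ll φ c)

/-- `Σ = {(a,b) ∈ S × S : r a = r b}`. -/
abbrev Sig {S : Type*} [Mul S] (φ : S →ₙ* Bicyclic) : Type _ :=
  {p : S × S // rr φ p.1 = rr φ p.2}

/-- The relation `∼` on pairs: `(a,b) ∼ (c,d)` iff there are `x y` with
`x * a = y * c`, `x * b = y * d`, `l x = r a`, `l y = r c`, `r x = r y`. -/
def simP {S : Type*} [Mul S] (φ : S →ₙ* Bicyclic) (p q : S × S) : Prop :=
  ∃ x y : S, x * p.1 = y * q.1 ∧ x * p.2 = y * q.2 ∧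
    ll φ x = rr φ p.1 ∧ ll φ y = rr φ q.1 ∧ rr φ x = rr φ y

/-- The relation `∼` on `Σ`. -/
def sim {S : Type*} [Mul S] (φ : S →ₙ* Bicyclic) (p q : Sig φ) : Prop :=
  simP φ p.1 q.1

theorem rr_mul {S : Type*} [Mul S] (φ : S →ₙ* Bicyclic) (x a : S) :
    rr φ (x * a) = rr φ x + (max (ll φ x) (rr φ a) - ll φ x) := by
  simp only [rr, ll, map_mul]; rfl

theorem rr_mul_eq {S : Type*} [Mul S] (φ : S →ₙ* Bicyclic) {x a : S}
    (h : rr φ a ≤ ll φ x) : rr φ (x * a) = rr φ x := by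
  have h1 := rr_mul φ x a
  have h2 : max (ll φ x) (rr φ a) = ll φ x := max_eq_left h
  omega

theorem sig_mul_ok {S : Type*} [Mul S] (φ : S →ₙ* Bicyclic) {a b c d x y : S}
    (hab : rr φ a = rr φ b) (hcd : rr φ c = rr φ d)
    (hx : ll φ x = rr φ b + (max (ll φ b) (ll φ c) - ll φ b))
    (hy : ll φ y = rr φ c + (max (ll φ b) (ll φ c) - ll φ c))
    (hr : rr φ x = rr φ y) : rr φ (x * a) = rr φ (y * d) := by
  have h1 := rr_mul_eq φ (x := x) (a := a)
    (by have := le_max_left (ll φ b) (ll φ c); omega)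
  have h2 := rr_mul_eq φ (x := y) (a := d)
    (by have := le_max_right (ll φ b) (ll φ c); omega)
  omega

/-- The set `Q` of `∼`-classes of `Σ`. -/
def QT {S : Type*} [Mul S] (φ : S →ₙ* Bicyclic) : Type _ := Quot (sim φ)

/-- The `∼`-class `[a,b]` of an element of `Σ`. -/
def cls {S : Type*} [Mul S] (φ : S →ₙ* Bicyclic) (p : Sig φ) : QT φ :=
  Quot.mk _ p

/-- Packaging `(a, b)` with `r a = r b` as an element of `Σ`. -/
def mkSig {S : Type*} [Mul S] (φ : S →ₙ* Bicyclic) (a b : S)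
    (h : rr φ a = rr φ b) : Sig φ := ⟨(a, b), h⟩

/-- A chosen witness `x` from condition (C) applied to `b, c`. -/
noncomputable def cx {S : Type*} [Mul S] {φ : S →ₙ* Bicyclic} (hC : CondC φ)
    (b c : S) : S := (hC b c).choose

/-- A chosen witness `y` from condition (C) applied to `b, c`. -/
noncomputable def cy {S : Type*} [Mul S] {φ : S →ₙ* Bicyclic} (hC : CondC φ)
    (b c : S) : S := (hC b c).choose_spec.choose

theorem c_spec {S : Type*} [Mul S] {φ : S →ₙ* Bicyclic} (hC : CondC φ) (b c : S) :
    cx hC b c * b = cy hC b c * c ∧ rr φ (cx hC b c) = rr φ (cy hC b c) ∧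
    ll φ (cx hC b c) = rr φ b + (max (ll φ b) (ll φ c) - ll φ b) ∧
    ll φ (cy hC b c) = rr φ c + (max (ll φ b) (ll φ c) - ll φ c) :=
  (hC b c).choose_spec.choose_spec

/-- Representative-level multiplication: `(a,b) · (c,d) = (x * a, y * d)` where
`x, y` are the witnesses from condition (C) for `b, c`. -/
noncomputable def pairMul {S : Type*} [Mul S] {φ : S →ₙ* Bicyclic} (hC : CondC φ)
    (p q : Sig φ) : Sig φ :=
  ⟨(cx hC p.1.2 q.1.1 * p.1.1, cy hC p.1.2 q.1.1 * q.1.2),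
    sig_mul_ok φ p.2 q.2 (c_spec hC p.1.2 q.1.1).2.2.1
      (c_spec hC p.1.2 q.1.1).2.2.2 (c_spec hC p.1.2 q.1.1).2.1⟩

/-- The multiplication `[a,b][c,d] = [x*a, y*d]` on the set `Q` of `∼`-classes. -/
noncomputable def qmul {S : Type*} [Mul S] {φ : S →ₙ* Bicyclic} (hC : CondC φ)
    (u v : QT φ) : QT φ :=
  cls φ (pairMul hC (Quot.out u) (Quot.out v))

theorem ll_cx_self {S : Type*} [Mul S] {φ : S →ₙ* Bicyclic} (hC : CondC φ)
    (a : S) : ll φ (cx hC a a) = rr φ a := by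
  have h := (c_spec hC a a).2.2.1
  have h2 : max (ll φ a) (ll φ a) = ll φ a := max_self _
  omega

/-- The embedding `θ : S → Q`, `a θ = [x, x*a]` for a chosen `x` with `l x = r a`. -/
noncomputable def theta {S : Type*} [Mul S] {φ : S →ₙ* Bicyclic} (hC : CondC φ)
    (a : S) : QT φ :=
  cls φ ⟨(cx hC a a, cx hC a a * a), (rr_mul_eq φ (ll_cx_self hC a).ge).symm⟩

/-- The inverse `[a,b]⁻¹ = [b,a]` on `Q`. -/
noncomputable def qinv {S : Type*} [Mul S] {φ : S →ₙ* Bicyclic} (u : QT φ) :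
    QT φ :=
  cls φ ⟨((Quot.out u).1.2, (Quot.out u).1.1), (Quot.out u).2.symm⟩

section AuxLemmas

variable {S : Type*} [Semigroup S] {φ : S →ₙ* Bicyclic}

theorem ll_mul' (x a : S) :
    ll φ (x * a) = ll φ a + (max (ll φ x) (rr φ a) - rr φ a) := by
  simp only [rr, ll, map_mul]; rfl

theorem ll_mul_eq' {x a : S} (h : rr φ a ≤ ll φ x) :
    ll φ (x * a) = ll φ a + (ll φ x - rr φ a) := by
  have h1 := ll_mul' (φ := φ) x a
  have h2 : max (ll φ x) (rr φ a) = ll φ x := max_eq_left h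
  omega

theorem sim_refl' (hC : CondC φ) (p : Sig φ) : sim φ p p :=
  ⟨cx hC p.1.1 p.1.1, cx hC p.1.1 p.1.1, rfl, rfl,
    ll_cx_self hC p.1.1, ll_cx_self hC p.1.1, rfl⟩

theorem sim_symm' {p q : Sig φ} (h : sim φ p q) : sim φ q p := by
  obtain ⟨x, y, h1, h2, hx, hy, hr⟩ := h
  exact ⟨y, x, h1.symm, h2.symm, hy, hx, hr.symm⟩

theorem sim_trans' (hC : CondC φ) {p q r : Sig φ}
    (h : sim φ p q) (h' : sim φ q r) : sim φ p r := by
  obtain ⟨x, y, h1, h2, hx, hy, hrxy⟩ := h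
  obtain ⟨u, v, h1', h2', hu, hv, hruv⟩ := h'
  obtain ⟨hwz, hrwz, hlw, hlz⟩ := c_spec hC y u
  set w := cx hC y u with hwdef
  set z := cy hC y u with hzdef
  have hmax : max (ll φ y) (ll φ u) = ll φ y := by omega
  have hlw' : ll φ w = rr φ y := by omega
  have hlz' : ll φ z = rr φ u := by omega
  refine ⟨w * x, z * v, ?_, ?_, ?_, ?_, ?_⟩
  · calc (w * x) * p.1.1 = w * (x * p.1.1) := mul_assoc _ _ _
      _ = w * (y * q.1.1) := by rw [h1]
      _ = (w * y) * q.1.1 := (mul_assoc _ _ _).symm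
      _ = (z * u) * q.1.1 := by rw [hwz]
      _ = z * (u * q.1.1) := mul_assoc _ _ _
      _ = z * (v * r.1.1) := by rw [h1']
      _ = (z * v) * r.1.1 := (mul_assoc _ _ _).symm
  · calc (w * x) * p.1.2 = w * (x * p.1.2) := mul_assoc _ _ _
      _ = w * (y * q.1.2) := by rw [h2]
      _ = (w * y) * q.1.2 := (mul_assoc _ _ _).symm
      _ = (z * u) * q.1.2 := by rw [hwz]
      _ = z * (u * q.1.2) := mul_assoc _ _ _
      _ = z * (v * r.1.2) := by rw [h2']
      _ = (z * v) * r.1.2 := (mul_assoc _ _ _).symm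
  · rw [ll_mul_eq' (show rr φ x ≤ ll φ w by omega)]; omega
  · rw [ll_mul_eq' (show rr φ v ≤ ll φ z by omega)]; omega
  · rw [rr_mul_eq φ (show rr φ x ≤ ll φ w by omega),
      rr_mul_eq φ (show rr φ v ≤ ll φ z by omega)]; omega

theorem sim_ll' {p q : Sig φ} (h : sim φ p q) :
    ll φ p.1.1 = ll φ q.1.1 ∧ ll φ p.1.2 = ll φ q.1.2 := by
  obtain ⟨x, y, h1, h2, hx, hy, hr⟩ := h
  have hp2 := p.2
  have hq2 := q.2
  have e1 := congrArg (ll φ) h1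
  have e2 := congrArg (ll φ) h2
  rw [ll_mul_eq' (show rr φ p.1.1 ≤ ll φ x by omega),
    ll_mul_eq' (show rr φ q.1.1 ≤ ll φ y by omega)] at e1
  rw [ll_mul_eq' (show rr φ p.1.2 ≤ ll φ x by omega),
    ll_mul_eq' (show rr φ q.1.2 ≤ ll φ y by omega)] at e2
  omega

theorem pairMul_sim (hBi : CondBi φ) (hBii : CondBii φ) (hC : CondC φ)
    {p p' q q' : Sig φ} (hp : sim φ p p') (hq : sim φ q q') :
    sim φ (pairMul hC p q) (pairMul hC p' q') := by
  have hbb' : ll φ p.1.2 = ll φ p'.1.2 := (sim_ll' hp).2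
  have hcc' : ll φ q.1.1 = ll φ q'.1.1 := (sim_ll' hq).1
  obtain ⟨⟨a, b⟩, hab⟩ := p
  obtain ⟨⟨a', b'⟩, hab'⟩ := p'
  obtain ⟨⟨c, d⟩, hcd⟩ := q
  obtain ⟨⟨c', d'⟩, hcd'⟩ := q'
  simp only at hbb' hcc' hab hab' hcd hcd'
  obtain ⟨s, t, hs1, hs2, hls, hlt, hst⟩ := hp
  obtain ⟨u, v, hu1, hu2, hlu, hlv, huv⟩ := hq
  simp only at hs1 hs2 hls hlt hu1 hu2 hlu hlv
  obtain ⟨hxy, hrxy, hlx, hly⟩ := c_spec hC b c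
  set x := cx hC b c with hxdef
  set y := cy hC b c with hydef
  obtain ⟨hxy', hrxy', hlx', hly'⟩ := c_spec hC b' c'
  set x' := cx hC b' c' with hxdef'
  set y' := cy hC b' c' with hydef'
  have hM1 : ll φ b ≤ max (ll φ b) (ll φ c) := le_max_left _ _
  have hM2 : ll φ c ≤ max (ll φ b) (ll φ c) := le_max_right _ _
  have hM1' : ll φ b' ≤ max (ll φ b') (ll φ c') := le_max_left _ _
  have hM2' : ll φ c' ≤ max (ll φ b') (ll φ c') := le_max_right _ _
  have hMM : max (ll φ b) (ll φ c) = max (ll φ b') (ll φ c') := by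
    rw [hbb', hcc']
  -- properties of e = x*b and e' = x'*b'
  have hle : ll φ (x * b) = max (ll φ b) (ll φ c) := by
    rw [ll_mul_eq' (show rr φ b ≤ ll φ x by omega)]; omega
  have hre : rr φ (x * b) = rr φ x := rr_mul_eq φ (by omega)
  have hle' : ll φ (x' * b') = max (ll φ b') (ll φ c') := by
    rw [ll_mul_eq' (show rr φ b' ≤ ll φ x' by omega)]; omega
  have hre' : rr φ (x' * b') = rr φ x' := rr_mul_eq φ (by omega)
  -- w, z from C applied to (x*b, x'*b')
  obtain ⟨hwz, hrwz, hlw, hlz⟩ := c_spec hC (x * b) (x' * b')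
  set w := cx hC (x * b) (x' * b') with hwdef
  set z := cy hC (x * b) (x' * b') with hzdef
  have hmaxe : max (ll φ (x * b)) (ll φ (x' * b')) = ll φ (x * b) := by omega
  have hlw' : ll φ w = rr φ x := by omega
  have hlz' : ll φ z = rr φ x' := by omega
  -- the a-side: w * (x * a) = z * (x' * a')
  have hside1 : w * (x * a) = z * (x' * a') := by
    obtain ⟨hgh, hrgh, hlg, hlh⟩ := c_spec hC (w * x) s
    set g := cx hC (w * x) s with hgdef
    set h := cy hC (w * x) s with hhdef
    have hlwx : ll φ (w * x) = ll φ x := by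
      rw [ll_mul_eq' (show rr φ x ≤ ll φ w by omega)]; omega
    have hmaxws : max (ll φ (w * x)) (ll φ s) = ll φ (w * x) := by omega
    have hlg' : ll φ g = rr φ (w * x) := by omega
    have hrwx : rr φ (w * x) = rr φ w := rr_mul_eq φ (by omega)
    -- key: g * (z * x') = h * t
    have key : g * (z * x') = h * t := by
      apply hBi _ _ b'
      · rw [ll_mul_eq' (show rr φ (z * x') ≤ ll φ g by
          rw [rr_mul_eq φ (show rr φ x' ≤ ll φ z by omega)]; omega)]
        rw [ll_mul_eq' (show rr φ x' ≤ ll φ z by omega)]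
        omega
      · rw [ll_mul_eq' (show rr φ t ≤ ll φ h by omega)]
        omega
      · calc (g * (z * x')) * b' = g * (z * (x' * b')) := by
              rw [mul_assoc, mul_assoc]
          _ = g * (w * (x * b)) := by rw [← hwz]
          _ = (g * (w * x)) * b := by rw [mul_assoc, mul_assoc]
          _ = (h * s) * b := by rw [hgh]
          _ = h * (s * b) := mul_assoc _ _ _
          _ = h * (t * b') := by rw [hs2]
          _ = (h * t) * b' := (mul_assoc _ _ _).symm
    -- cancel g on the left
    apply hBii _ _ g
    · rw [rr_mul_eq φ (show rr φ (x * a) ≤ ll φ w by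
        rw [rr_mul_eq φ (show rr φ a ≤ ll φ x by omega)]; omega)]
      omega
    · rw [rr_mul_eq φ (show rr φ (x' * a') ≤ ll φ z by
        rw [rr_mul_eq φ (show rr φ a' ≤ ll φ x' by omega)]; omega)]
      omega
    · calc g * (w * (x * a)) = (g * (w * x)) * a := by rw [mul_assoc, mul_assoc]
        _ = (h * s) * a := by rw [hgh]
        _ = h * (s * a) := mul_assoc _ _ _
        _ = h * (t * a') := by rw [hs1]
        _ = (h * t) * a' := (mul_assoc _ _ _).symm
        _ = (g * (z * x')) * a' := by rw [key]
        _ = g * (z * (x' * a')) := by rw [mul_assoc, mul_assoc]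
  -- the d-side: w * (y * d) = z * (y' * d')
  have hside2 : w * (y * d) = z * (y' * d') := by
    obtain ⟨hgh, hrgh, hlg, hlh⟩ := c_spec hC (w * y) u
    set g := cx hC (w * y) u with hgdef
    set h := cy hC (w * y) u with hhdef
    have hlwy : ll φ (w * y) = ll φ y := by
      rw [ll_mul_eq' (show rr φ y ≤ ll φ w by omega)]; omega
    have hmaxwu : max (ll φ (w * y)) (ll φ u) = ll φ (w * y) := by omega
    have hlg' : ll φ g = rr φ (w * y) := by omega
    have hrwy : rr φ (w * y) = rr φ w := rr_mul_eq φ (by omega)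
    have key : g * (z * y') = h * v := by
      apply hBi _ _ c'
      · rw [ll_mul_eq' (show rr φ (z * y') ≤ ll φ g by
          rw [rr_mul_eq φ (show rr φ y' ≤ ll φ z by omega)]; omega)]
        rw [ll_mul_eq' (show rr φ y' ≤ ll φ z by omega)]
        omega
      · rw [ll_mul_eq' (show rr φ v ≤ ll φ h by omega)]
        omega
      · calc (g * (z * y')) * c' = g * (z * (y' * c')) := by
              rw [mul_assoc, mul_assoc]
          _ = g * (z * (x' * b')) := by rw [← hxy']
          _ = g * (w * (x * b)) := by rw [← hwz]
          _ = g * (w * (y * c)) := by rw [hxy]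
          _ = (g * (w * y)) * c := by rw [mul_assoc, mul_assoc]
          _ = (h * u) * c := by rw [hgh]
          _ = h * (u * c) := mul_assoc _ _ _
          _ = h * (v * c') := by rw [hu1]
          _ = (h * v) * c' := (mul_assoc _ _ _).symm
    apply hBii _ _ g
    · rw [rr_mul_eq φ (show rr φ (y * d) ≤ ll φ w by
        rw [rr_mul_eq φ (show rr φ d ≤ ll φ y by omega)]; omega)]
      omega
    · rw [rr_mul_eq φ (show rr φ (y' * d') ≤ ll φ z by
        rw [rr_mul_eq φ (show rr φ d' ≤ ll φ y' by omega)]; omega)]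
      omega
    · calc g * (w * (y * d)) = (g * (w * y)) * d := by rw [mul_assoc, mul_assoc]
        _ = (h * u) * d := by rw [hgh]
        _ = h * (u * d) := mul_assoc _ _ _
        _ = h * (v * d') := by rw [hu2]
        _ = (h * v) * d' := (mul_assoc _ _ _).symm
        _ = (g * (z * y')) * d' := by rw [key]
        _ = g * (z * (y' * d')) := by rw [mul_assoc, mul_assoc]
  refine ⟨w, z, hside1, hside2, ?_, ?_, hrwz⟩
  · show ll φ w = rr φ (x * a)
    rw [rr_mul_eq φ (show rr φ a ≤ ll φ x by omega)]; omega
  · show ll φ z = rr φ (x' * a')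
    rw [rr_mul_eq φ (show rr φ a' ≤ ll φ x' by omega)]; omega

theorem sim_equiv (hC : CondC φ) : Equivalence (sim φ) :=
  ⟨sim_refl' hC, sim_symm', fun h h' => sim_trans' hC h h'⟩

theorem cls_eq_iff (hC : CondC φ) {p q : Sig φ} :
    cls φ p = cls φ q ↔ sim φ p q := by
  show (Quot.mk (sim φ) p : Quot (sim φ)) = Quot.mk (sim φ) q ↔ sim φ p q
  rw [Quot.eq]
  exact (sim_equiv hC).eqvGen_iff

theorem qmul_mk (hBi : CondBi φ) (hBii : CondBii φ) (hC : CondC φ)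
    (p q : Sig φ) :
    qmul hC (cls φ p) (cls φ q) = cls φ (pairMul hC p q) := by
  have hp : sim φ (Quot.out (cls φ p)) p :=
    (cls_eq_iff hC).mp (Quot.out_eq (cls φ p))
  have hq : sim φ (Quot.out (cls φ q)) q :=
    (cls_eq_iff hC).mp (Quot.out_eq (cls φ q))
  exact (cls_eq_iff hC).mpr (pairMul_sim hBi hBii hC hp hq)

end AuxLemmas

/-- The idempotents of `Q` are exactly the classes `[a,a]`, `a ∈ S`. -/
theorem stmt16 {S : Type*} [Semigroup S] (φ : S →ₙ* Bicyclic)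
    (hA : CondA φ) (hBi : CondBi φ) (hBii : CondBii φ) (hC : CondC φ) :
    ∀ p : Sig φ,
      qmul hC (cls φ p) (cls φ p) = cls φ p ↔
        ∃ c : S, cls φ p = cls φ (mkSig φ c c rfl) := by
  intro p
  constructor
  · intro h
    rw [qmul_mk hBi hBii hC] at h
    have hsim : sim φ (pairMul hC p p) p := (cls_eq_iff hC).mp h
    obtain ⟨⟨a, b⟩, hab⟩ := p
    have hab' : rr φ a = rr φ b := hab
    obtain ⟨hxy, hrxy, hlx, hly⟩ := c_spec hC b a
    set x := cx hC b a with hxdef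
    set y := cy hC b a with hydef
    have hM1 : ll φ b ≤ max (ll φ b) (ll φ a) := le_max_left _ _
    have hM2 : ll φ a ≤ max (ll φ b) (ll φ a) := le_max_right _ _
    have hinv := sim_ll' hsim
    have h1 : ll φ (x * a) = ll φ a := hinv.1
    have h2 : ll φ (y * b) = ll φ b := hinv.2
    rw [ll_mul_eq' (show rr φ a ≤ ll φ x by omega)] at h1
    rw [ll_mul_eq' (show rr φ b ≤ ll φ y by omega)] at h2
    have hlab : ll φ a = ll φ b := by omega
    have hlx2 : ll φ x = rr φ b := by omega
    have hly2 : ll φ y = rr φ a := by omega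
    obtain ⟨w, z, hw1, hw2, hlw, hlz, hrwz⟩ := hsim
    have hw1' : w * (x * a) = z * a := hw1
    have hw2' : w * (y * b) = z * b := hw2
    have hlw' : ll φ w = rr φ (x * a) := hlw
    have hlz' : ll φ z = rr φ a := hlz
    have hrxa : rr φ (x * a) = rr φ x := rr_mul_eq φ (by omega)
    have hwx : w * x = z := by
      apply hBi _ _ a
      · rw [ll_mul_eq' (show rr φ x ≤ ll φ w by omega)]; omega
      · omega
      · rw [mul_assoc]; exact hw1'
    have hwy : w * y = z := by
      apply hBi _ _ b
      · rw [ll_mul_eq' (show rr φ y ≤ ll φ w by omega)]; omega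
      · omega
      · rw [mul_assoc]; exact hw2'
    have hxy2 : x = y := by
      apply hBii _ _ w
      · omega
      · omega
      · rw [hwx, hwy]
    have hba : b = a := by
      apply hBii _ _ x
      · omega
      · omega
      · rw [hxy, ← hxy2]
    refine ⟨a, ?_⟩
    subst hba
    rfl
  · rintro ⟨c, hc⟩
    rw [hc, qmul_mk hBi hBii hC]
    apply (cls_eq_iff hC).mpr
    obtain ⟨hxy, hrxy, hlx, hly⟩ := c_spec hC c c
    set x := cx hC c c with hxdef
    set y := cy hC c c with hydef
    have hms : max (ll φ c) (ll φ c) = ll φ c := max_self _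
    obtain ⟨huv1, hruv, hlu, hlv⟩ := c_spec hC (x * c) c
    set u := cx hC (x * c) c with hudef
    set v := cy hC (x * c) c with hvdef
    have hlxc : ll φ (x * c) = ll φ c := by
      rw [ll_mul_eq' (show rr φ c ≤ ll φ x by omega)]; omega
    have hmax : max (ll φ (x * c)) (ll φ c) = ll φ c := by omega
    refine ⟨u, v, ?_, ?_, ?_, ?_, hruv⟩
    · show u * (x * c) = v * c
      exact huv1
    · show u * (y * c) = v * c
      rw [← hxy]; exact huv1
    · show ll φ u = rr φ (x * c)
      omega
    · show ll φ v = rr φ c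
      omega
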